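/- arXiv:2505.12518 — 2 statements merged into one kernel-verified Lean document; each statement's English description precedes it below -/
import Mathlib

section
/- For every finite simple graph G, the sigma index σ(G) is an even integer. -/
open Finset

variable {V : Type*} [Fintype V] [DecidableEq V]

/-- Albertson irregularity index. -/
def irr (G : SimpleGraph V) [DecidableRel G.Adj] : ℤ :=
  ∑ e ∈ G.edgeFinset,
    Sym2.lift ⟨fun u v => |(G.degree u : ℤ) - (G.degree v : ℤ)|,
      fun u v => abs_sub_comm _ _⟩ e

/-- Sigma irregularity index. -/
def sigmaIdx (G : SimpleGraph V) [DecidableRel G.Adj] : ℤ :=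
  ∑ e ∈ G.edgeFinset,
    Sym2.lift ⟨fun u v => ((G.degree u : ℤ) - (G.degree v : ℤ)) ^ 2,
      fun u v => by ring⟩ e

/-- First Zagreb index. -/
def M1 (G : SimpleGraph V) [DecidableRel G.Adj] : ℤ :=
  ∑ v : V, (G.degree v : ℤ) ^ 2


lemma sum_dart_fst_eq_sum_edges (G : SimpleGraph V) [DecidableRel G.Adj]
    (f : V → ZMod 2) :
    ∑ d : G.Dart, f d.fst =
      ∑ e ∈ G.edgeFinset,
        Sym2.lift ⟨fun u v => f u + f v, fun u v => add_comm _ _⟩ e := by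
  rw [← Finset.sum_fiberwise_of_maps_to
    (g := SimpleGraph.Dart.edge) (t := G.edgeFinset) (fun d _ => by
      rw [SimpleGraph.mem_edgeFinset]; exact d.edge_mem)]
  refine Finset.sum_congr rfl fun e he => ?_
  rw [SimpleGraph.mem_edgeFinset] at he
  induction e with
  | _ u v =>
    let d : G.Dart := ⟨(u, v), he⟩
    have hfib : (Finset.univ.filter fun d' : G.Dart => d'.edge = s(u, v)) = {d, d.symm} := by
      have := d.edge_fiber
      exact this
    rw [hfib, Finset.sum_insert (by simpa using d.symm_ne.symm), Finset.sum_singleton]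
    simp [d, SimpleGraph.Dart.symm]

lemma sum_dart_fst_eq_sum_deg (G : SimpleGraph V) [DecidableRel G.Adj]
    (f : V → ZMod 2) :
    ∑ d : G.Dart, f d.fst = ∑ v : V, (G.degree v : ZMod 2) * f v := by
  rw [← Finset.sum_fiberwise_of_maps_to
    (g := fun d : G.Dart => d.fst) (fun d _ => Finset.mem_univ _)]
  refine Finset.sum_congr rfl fun v _ => ?_
  have hstep : ∑ d ∈ Finset.univ.filter (fun d : G.Dart => d.fst = v), f d.fst
      = ∑ _d ∈ Finset.univ.filter (fun d : G.Dart => d.fst = v), f v :=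
    Finset.sum_congr rfl fun d hd => by rw [(Finset.mem_filter.1 hd).2]
  have hc : (Finset.univ.filter fun d : G.Dart => d.fst = v).card = G.degree v := by
    simpa using G.dart_fst_fiber_card_eq_degree v
  rw [hstep, Finset.sum_const, hc, nsmul_eq_mul]

theorem sigma_even (G : SimpleGraph V) [DecidableRel G.Adj] :
    Even (sigmaIdx G) := by
  rw [even_iff_two_dvd, show (2:ℤ) = ((2:ℕ):ℤ) by norm_num, ← ZMod.intCast_zmod_eq_zero_iff_dvd]
  have h1 : ((sigmaIdx G : ℤ) : ZMod 2) =
      ∑ e ∈ G.edgeFinset,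
        Sym2.lift ⟨fun u v => (G.degree u : ZMod 2) + (G.degree v : ZMod 2),
          fun u v => add_comm _ _⟩ e := by
    rw [sigmaIdx, Int.cast_sum]
    refine Finset.sum_congr rfl fun e _ => ?_
    induction e with
    | _ u v =>
      simp only [Sym2.lift_mk]
      push_cast
      have : ∀ x y : ZMod 2, (x - y) ^ 2 = x + y := by decide
      exact this _ _
  rw [h1, ← sum_dart_fst_eq_sum_edges G (fun v => (G.degree v : ZMod 2)),
    sum_dart_fst_eq_sum_deg G (fun v => (G.degree v : ZMod 2))]
  have : ∀ x : ZMod 2, x * x = x := by decide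
  simp_rw [this]
  rw [← Nat.cast_sum, G.sum_degrees_eq_twice_card_edges, Nat.cast_mul]
  exact mul_eq_zero_of_left (by decide) _
end

section
/- Among all trees on n ≥ 2 vertices, the star S_n attains the maximum Albertson index; that is, for every tree T on n vertices, irr(T) ≤ (n-1)(n-2), with equality if T is the star. -/
open Finset

variable {V : Type*} [Fintype V] [DecidableEq V]

/-- The star graph on `n` vertices: vertex `0` is adjacent to all other vertices. -/
def starGraph (n : ℕ) : SimpleGraph (Fin n) where
  Adj u v := u ≠ v ∧ (u.val = 0 ∨ v.val = 0)
  symm := by constructor; intro u v ⟨h1, h2⟩; exact ⟨h1.symm, h2.symm⟩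
  loopless := by constructor; intro u ⟨h, _⟩; exact h rfl

instance (n : ℕ) : DecidableRel (starGraph n).Adj :=
  fun u v => inferInstanceAs (Decidable (u ≠ v ∧ (u.val = 0 ∨ v.val = 0)))

lemma star_adj {n : ℕ} {u v : Fin n} :
    (starGraph n).Adj u v ↔ u ≠ v ∧ (u.val = 0 ∨ v.val = 0) := Iff.rfl

lemma isolated_reachable {G : SimpleGraph V} {w x : V}
    (h : ∀ y, ¬ G.Adj w y) (hr : G.Reachable w x) : w = x := by
  obtain ⟨p⟩ := hr
  cases p with
  | nil => rfl
  | cons ha _ => exact absurd ha (h _)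

def z (n : ℕ) (hn : 2 ≤ n) : Fin n := ⟨0, by omega⟩

section Star

variable {n : ℕ} (hn : 2 ≤ n)

lemma star_val_zero {u : Fin n} (hu : u.val = 0) : u = z n hn := Fin.ext hu

include hn in
lemma star_neighbor_zero :
    (starGraph n).neighborFinset (z n hn) = Finset.univ.erase (z n hn) := by
  ext x
  simp only [SimpleGraph.mem_neighborFinset, star_adj, Finset.mem_erase,
    Finset.mem_univ, and_true]
  constructor
  · rintro ⟨h, _⟩; exact fun hx => h hx.symm
  · intro h; exact ⟨fun hx => h hx.symm, Or.inl rfl⟩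

include hn in
lemma star_degree_zero : (starGraph n).degree (z n hn) = n - 1 := by
  rw [SimpleGraph.degree, star_neighbor_zero hn, Finset.card_erase_of_mem (Finset.mem_univ _),
    Finset.card_univ, Fintype.card_fin]

include hn in
lemma star_neighbor_ne {u : Fin n} (hu : u ≠ z n hn) :
    (starGraph n).neighborFinset u = {z n hn} := by
  have hu0 : u.val ≠ 0 := fun h => hu (Fin.ext h)
  ext x
  simp only [SimpleGraph.mem_neighborFinset, star_adj, Finset.mem_singleton]
  constructor
  · rintro ⟨h, h0 | h0⟩
    · exact absurd h0 hu0
    · exact Fin.ext h0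
  · rintro rfl
    exact ⟨hu, Or.inr rfl⟩

include hn in
lemma star_degree_ne {u : Fin n} (hu : u ≠ z n hn) : (starGraph n).degree u = 1 := by
  rw [SimpleGraph.degree, star_neighbor_ne hn hu, Finset.card_singleton]

include hn in
lemma star_connected : (starGraph n).Connected := by
  have : Nonempty (Fin n) := ⟨z n hn⟩
  refine ⟨fun u v => ?_⟩
  have key : ∀ w : Fin n, (starGraph n).Reachable w (z n hn) := by
    intro w
    by_cases hw : w = z n hn
    · exact hw ▸ SimpleGraph.Reachable.refl _
    · exact (SimpleGraph.Adj.reachable ⟨hw, Or.inr rfl⟩)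
  exact (key u).trans (key v).symm

include hn in
lemma star_isTree : (starGraph n).IsTree := by
  refine ⟨star_connected hn, ?_⟩
  rw [SimpleGraph.isAcyclic_iff_forall_adj_isBridge]
  intro v w hvw
  -- WLOG handled by symmetry: one of v, w has val 0
  have main : ∀ a b : Fin n, (starGraph n).Adj a b → a = z n hn →
      (starGraph n).IsBridge s(a, b) := by
    intro a b hab ha
    rw [SimpleGraph.isBridge_iff]
    refine fun hr => ?_
    have hb : b ≠ z n hn := fun h => hab.ne (ha.trans h.symm)
    have hiso : ∀ y, ¬ ((starGraph n) \ SimpleGraph.fromEdgeSet {s(a, b)}).Adj b y := by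
      intro y ⟨hadj, hne⟩
      have hy : y = z n hn := by
        rcases hadj.2 with h0 | h0
        · exact absurd h0 (fun h => hb (Fin.ext h))
        · exact Fin.ext h0
      subst hy
      rw [← ha] at hadj hne
      exact hne ⟨by simp [Sym2.eq_swap], hadj.ne⟩
    exact hb ((isolated_reachable hiso hr.symm) ▸ ha.symm ▸ rfl) |>.elim
  rcases hvw.2 with h0 | h0
  · exact main v w hvw (Fin.ext h0)
  · have := main w v hvw.symm (Fin.ext h0)
    rwa [Sym2.eq_swap] at this

include hn in
lemma star_card_edges : (starGraph n).edgeFinset.card = n - 1 := by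
  have h := (starGraph n).sum_degrees_eq_twice_card_edges
  have hsum : ∑ v, (starGraph n).degree v = 2 * (n - 1) := by
    rw [← Finset.add_sum_erase _ _ (Finset.mem_univ (z n hn)), star_degree_zero hn,
      Finset.sum_congr rfl (fun x hx => star_degree_ne hn (Finset.ne_of_mem_erase hx)),
      Finset.sum_const, Finset.card_erase_of_mem (Finset.mem_univ _), Finset.card_univ,
      Fintype.card_fin, smul_eq_mul]
    omega
  omega

include hn in
lemma star_irr : irr (starGraph n) = ((n : ℤ) - 1) * ((n : ℤ) - 2) := by
  rw [irr]
  have hterm : ∀ e ∈ (starGraph n).edgeFinset,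
      Sym2.lift ⟨fun u v => |((starGraph n).degree u : ℤ) - ((starGraph n).degree v : ℤ)|,
        fun u v => abs_sub_comm _ _⟩ e = (n : ℤ) - 2 := by
    intro e he
    induction e with
    | h a b =>
      rw [SimpleGraph.mem_edgeFinset, SimpleGraph.mem_edgeSet] at he
      have key : ∀ c d : Fin n, (starGraph n).Adj c d → c = z n hn →
          |((starGraph n).degree c : ℤ) - ((starGraph n).degree d : ℤ)| = (n : ℤ) - 2 := by
        intro c d hcd hc
        have hd : d ≠ z n hn := fun h => hcd.ne (hc.trans h.symm)
        rw [hc, star_degree_zero hn, star_degree_ne hn hd]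
        have h1 : ((n - 1 : ℕ) : ℤ) = (n : ℤ) - 1 := by omega
        rw [h1, Nat.cast_one]
        rw [abs_of_nonneg (by omega)]
        ring
      rcases he.2 with h0 | h0
      · exact key a b he (Fin.ext h0)
      · have := key b a he.symm (Fin.ext h0)
        rw [abs_sub_comm] at this
        exact this
  rw [Finset.sum_congr rfl hterm, Finset.sum_const, star_card_edges hn, nsmul_eq_mul]
  have h1 : ((n - 1 : ℕ) : ℤ) = (n : ℤ) - 1 := by omega
  rw [h1]

end Star

lemma tree_irr_le {n : ℕ} (hn : 2 ≤ n) (T : SimpleGraph (Fin n))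
    (inst : DecidableRel T.Adj) (hT : T.IsTree) :
    @irr (Fin n) _ T inst ≤ ((n : ℤ) - 1) * ((n : ℤ) - 2) := by
  have hcard : T.edgeFinset.card + 1 = n := by
    have := hT.card_edgeFinset
    rwa [Fintype.card_fin] at this
  rw [irr]
  have hbound : ∀ e ∈ T.edgeFinset,
      Sym2.lift ⟨fun u v => |(T.degree u : ℤ) - (T.degree v : ℤ)|,
        fun u v => abs_sub_comm _ _⟩ e ≤ (n : ℤ) - 2 := by
    intro e he
    induction e with
    | h a b =>
      rw [SimpleGraph.mem_edgeFinset, SimpleGraph.mem_edgeSet] at he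
      have h1 : 0 < T.degree a := by
        rw [T.degree_pos_iff_exists_adj]; exact ⟨b, he⟩
      have h2 : 0 < T.degree b := by
        rw [T.degree_pos_iff_exists_adj]; exact ⟨a, he.symm⟩
      have h3 : T.degree a < n := by
        have := T.degree_lt_card_verts a; rwa [Fintype.card_fin] at this
      have h4 : T.degree b < n := by
        have := T.degree_lt_card_verts b; rwa [Fintype.card_fin] at this
      rw [Sym2.lift_mk, abs_sub_le_iff]
      omega
  calc ∑ e ∈ T.edgeFinset, _ ≤ T.edgeFinset.card • ((n : ℤ) - 2) :=
        Finset.sum_le_card_nsmul _ _ _ hbound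
    _ = ((n : ℤ) - 1) * ((n : ℤ) - 2) := by
        rw [nsmul_eq_mul]
        congr 1
        omega

theorem star_maximizes_irr (n : ℕ) (hn : 2 ≤ n) :
    (∀ (T : SimpleGraph (Fin n)) (inst : DecidableRel T.Adj),
        T.IsTree → @irr (Fin n) _ T inst ≤ ((n : ℤ) - 1) * ((n : ℤ) - 2)) ∧
      (starGraph n).IsTree ∧
      irr (starGraph n) = ((n : ℤ) - 1) * ((n : ℤ) - 2) :=
  ⟨fun T inst hT => tree_irr_le hn T inst hT, star_isTree hn, star_irr hn⟩
end
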